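/- Suppose J₁ skew-symmetric, R₁ symmetric positive definite (both constant), J₁₂^T E invertible, and suppose x̄₁ satisfies ∇_{x₁}H(x̄₁, x₂*) = (I - E(J₁₂^T E)^{-1} J₁₂^T)(J₁-R₁)^{-1} d₁ with ∇_{x₂}H(x̄₁, x₂*) = 0. Then the point with gradient values (∇_{x₁}H_cl, ∇_{x₂}H_cl, ∇_ζ H_cl) = ((J₁-R₁)^{-1} d₁, 0, -(J₁₂^T E)^{-1} J₁₂^T (J₁-R₁)^{-1} d₁) is an equilibrium of the closed-loop vector field ẇ = F ∇H_cl(w) - (d₁, 0, 0), where F = [[J₁-R₁, J₁₂, 0], [-J₁₂^T, J₂-R₂, -J₁₂^T E], [0, E^T J₁₂, 0]]. -/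

import Mathlib

open Matrix

lemma skew_quad {m : ℕ} (J1 : Matrix (Fin m) (Fin m) ℝ) (hJ1 : J1ᵀ = -J1)
    (x : Fin m → ℝ) : x ⬝ᵥ (J1 *ᵥ x) = 0 := by
  have h : x ⬝ᵥ (J1 *ᵥ x) = (J1ᵀ *ᵥ x) ⬝ᵥ x := by
    rw [Matrix.dotProduct_mulVec, Matrix.mulVec_transpose]
  rw [hJ1] at h
  rw [Matrix.neg_mulVec, neg_dotProduct, dotProduct_comm (J1 *ᵥ x) x] at h
  linarith

lemma JR_unit {m : ℕ} (J1 R1 : Matrix (Fin m) (Fin m) ℝ)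
    (hJ1 : J1ᵀ = -J1) (hR1 : R1.PosDef) : IsUnit (J1 - R1) := by
  rw [← Matrix.mulVec_injective_iff_isUnit]
  have hker : ∀ x, (J1 - R1) *ᵥ x = 0 → x = 0 := by
    intro x hx
    by_contra hx0
    have h1 : x ⬝ᵥ ((J1 - R1) *ᵥ x) = 0 := by rw [hx]; simp
    rw [Matrix.sub_mulVec, dotProduct_sub, skew_quad J1 hJ1] at h1
    have h2 : 0 < x ⬝ᵥ (R1 *ᵥ x) := by
      have := hR1.dotProduct_mulVec_pos hx0
      simpa using this
    linarith
  intro x y hxy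
  have : (J1 - R1) *ᵥ (x - y) = 0 := by
    rw [Matrix.mulVec_sub, hxy, sub_self]
  have := hker _ this
  exact sub_eq_zero.mp this

theorem stmt_13 {m p : ℕ} (J1 R1 : Matrix (Fin m) (Fin m) ℝ)
    (J2 R2 : Matrix (Fin p) (Fin p) ℝ) (J12 E : Matrix (Fin m) (Fin p) ℝ)
    (d1 : Fin m → ℝ)
    (hJ1 : J1ᵀ = -J1) (hR1 : R1.PosDef) (hJ2 : J2ᵀ = -J2) (hR2 : R2.PosSemidef)
    (hInv : IsUnit (J12ᵀ * E))
    (g1 : Fin m → ℝ) (g2 g3 : Fin p → ℝ)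
    (hg1 : g1 = (J1 - R1)⁻¹ *ᵥ d1) (hg2 : g2 = 0)
    (hg3 : g3 = -(((J12ᵀ * E)⁻¹ * J12ᵀ * (J1 - R1)⁻¹) *ᵥ d1)) :
    (J1 - R1) *ᵥ g1 + J12 *ᵥ g2 - d1 = 0 ∧
    -(J12ᵀ *ᵥ g1) + (J2 - R2) *ᵥ g2 - (J12ᵀ * E) *ᵥ g3 = 0 ∧
    (Eᵀ * J12) *ᵥ g2 = 0 := by
  have hU := JR_unit J1 R1 hJ1 hR1
  have hcancel : (J1 - R1) * (J1 - R1)⁻¹ = 1 := Matrix.mul_nonsing_inv _ (Matrix.isUnit_iff_isUnit_det _ |>.mp hU)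
  have hcancel2 : (J12ᵀ * E) * (J12ᵀ * E)⁻¹ = 1 := Matrix.mul_nonsing_inv _ (Matrix.isUnit_iff_isUnit_det _ |>.mp hInv)
  subst hg1 hg2 hg3
  refine ⟨?_, ?_, ?_⟩
  · rw [Matrix.mulVec_mulVec, hcancel]
    simp
  · rw [Matrix.mulVec_mulVec, Matrix.mulVec_neg, Matrix.mulVec_mulVec,
      show J12ᵀ * E * ((J12ᵀ * E)⁻¹ * J12ᵀ * (J1 - R1)⁻¹) = J12ᵀ * (J1 - R1)⁻¹ by
        rw [← Matrix.mul_assoc, ← Matrix.mul_assoc, hcancel2, Matrix.one_mul]]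
    simp
  · simp
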